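/- arXiv:1809.02292 — 3 statements merged into one kernel-verified Lean document; each statement's English description precedes it below -/
import Mathlib

section
/- Let (a_t)_{t≥1} and (b_t)_{t≥1} be sequences of nonnegative real numbers such that ∑_{t=1}^∞ a_t = +∞ and ∑_{t=1}^∞ a_t·b_t < +∞. If in addition there exists a constant K > 0 such that |b_{t+1} − b_t| ≤ K·a_t for all t, then lim_{t→∞} b_t = 0. -/
open Filter

/-- If `(a_t)` and `(b_t)` are nonnegative real sequences with
`∑ a_t = +∞` and `∑ a_t b_t < +∞`, and moreover there is a constant `K > 0` with
`|b_{t+1} - b_t| ≤ K · a_t` for all `t`, then `b_t → 0`. -/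
theorem tendsto_zero_of_divergent_weights (a b : ℕ → ℝ)
    (ha_nonneg : ∀ t, 0 ≤ a t) (hb_nonneg : ∀ t, 0 ≤ b t)
    (ha_div : Tendsto (fun n => ∑ t ∈ Finset.range n, a t) atTop atTop)
    (hab_sum : Summable (fun t => a t * b t))
    (K : ℝ) (hK : 0 < K) (hdiff : ∀ t, |b (t + 1) - b t| ≤ K * a t) :
    Tendsto b atTop (nhds 0) := by
  classical
  rw [Metric.tendsto_atTop]
  intro ε hε
  set ε' : ℝ := ε / 2 with hε'def
  have hε' : 0 < ε' := by positivity
  set f : ℕ → ℝ := fun t => a t * b t with hf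
  set P : ℕ → ℝ := fun n => ∑ t ∈ Finset.range n, f t with hPdef
  have hfnn : ∀ t, 0 ≤ f t := fun t => mul_nonneg (ha_nonneg t) (hb_nonneg t)
  have hPmono : Monotone P := by
    intro m n hmn
    exact Finset.sum_le_sum_of_subset_of_nonneg (Finset.range_subset_range.mpr hmn)
      (fun i _ _ => hfnn i)
  set L : ℝ := ∑' t, f t with hLdef
  have hPL : Tendsto P atTop (nhds L) := hab_sum.hasSum.tendsto_sum_nat
  have hPle : ∀ n, P n ≤ L := fun n =>
    Summable.sum_le_tsum (Finset.range n) (fun i _ => hfnn i) hab_sum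
  have hP0 : P 0 = 0 := by simp [hPdef]
  have hL0 : 0 ≤ L := hP0 ▸ hPle 0
  have hδ : 0 < ε' ^ 2 / K := by positivity
  obtain ⟨N, hN0⟩ := Metric.tendsto_atTop.mp hPL (ε' ^ 2 / K) hδ
  have hN : ∀ n, N ≤ n → L - P n < ε' ^ 2 / K := by
    intro n hn
    have := hN0 n hn
    rw [Real.dist_eq] at this
    have := abs_lt.mp this
    linarith [this.1]
  refine ⟨N, fun u hu => ?_⟩
  have key : b u < 2 * ε' := by
    by_contra hbu
    push_neg at hbu
    -- Step 1: there is v ≥ u with b v < ε'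
    have hex : ∃ v, u ≤ v ∧ b v < ε' := by
      by_contra hno
      push_neg at hno
      have hbound : ∀ n, ∑ t ∈ Finset.range n, a t ≤ ∑ t ∈ Finset.range u, a t + L / ε' := by
        intro n
        rcases le_total n u with h | h
        · have h1 : ∑ t ∈ Finset.range n, a t ≤ ∑ t ∈ Finset.range u, a t :=
            Finset.sum_le_sum_of_subset_of_nonneg (Finset.range_subset_range.mpr h)
              (fun i _ _ => ha_nonneg i)
          have h2 : 0 ≤ L / ε' := div_nonneg hL0 hε'.le
          linarith
        · have hsplit : ∑ t ∈ Finset.range n, a t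
              = ∑ t ∈ Finset.range u, a t + ∑ t ∈ Finset.Ico u n, a t := by
            rw [Finset.sum_Ico_eq_sub _ h]; ring
          have h1 : ε' * ∑ t ∈ Finset.Ico u n, a t ≤ ∑ t ∈ Finset.Ico u n, f t := by
            rw [Finset.mul_sum]
            refine Finset.sum_le_sum fun t ht => ?_
            rw [Finset.mem_Ico] at ht
            have := hno t ht.1
            calc ε' * a t ≤ b t * a t := by
                  exact mul_le_mul_of_nonneg_right this (ha_nonneg t)
              _ = f t := by rw [hf]; ring
          have h2 : ∑ t ∈ Finset.Ico u n, f t = P n - P u := by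
            rw [hPdef]; exact Finset.sum_Ico_eq_sub f h
          have h3 : 0 ≤ P u := Finset.sum_nonneg fun i _ => hfnn i
          have h4 : ∑ t ∈ Finset.Ico u n, a t ≤ L / ε' := by
            rw [le_div_iff₀ hε']
            have := hPle n
            nlinarith
          linarith
      obtain ⟨n, hn⟩ := (ha_div.eventually_gt_atTop
        (∑ t ∈ Finset.range u, a t + L / ε')).exists
      exact absurd (hbound n) (not_le.mpr hn)
    -- v : first index ≥ u with b v < ε'
    let v := Nat.find hex
    have hv : u ≤ v ∧ b v < ε' := Nat.find_spec hex
    have hmin : ∀ t, u ≤ t → t < v → ε' ≤ b t := by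
      intro t hut htv
      by_contra h
      push_neg at h
      exact Nat.find_min hex htv ⟨hut, h⟩
    have huv : u < v := by
      rcases lt_or_eq_of_le hv.1 with h | h
      · exact h
      · exfalso; rw [← h] at hv; linarith [hv.2]
    -- telescoping
    have htel : b v - b u = ∑ t ∈ Finset.Ico u v, (b (t + 1) - b t) := by
      rw [Finset.sum_Ico_eq_sub _ huv.le, Finset.sum_range_sub, Finset.sum_range_sub]
      ring
    have h1 : b u - b v ≤ K * ∑ t ∈ Finset.Ico u v, a t := by
      calc b u - b v ≤ |b v - b u| := by
            rw [abs_sub_comm]; exact le_abs_self _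
        _ = |∑ t ∈ Finset.Ico u v, (b (t + 1) - b t)| := by rw [htel]
        _ ≤ ∑ t ∈ Finset.Ico u v, |b (t + 1) - b t| := Finset.abs_sum_le_sum_abs _ _
        _ ≤ ∑ t ∈ Finset.Ico u v, K * a t := Finset.sum_le_sum fun t _ => hdiff t
        _ = K * ∑ t ∈ Finset.Ico u v, a t := by rw [Finset.mul_sum]
    have h2 : ε' * ∑ t ∈ Finset.Ico u v, a t ≤ ∑ t ∈ Finset.Ico u v, f t := by
      rw [Finset.mul_sum]
      refine Finset.sum_le_sum fun t ht => ?_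
      rw [Finset.mem_Ico] at ht
      have hbt : ε' ≤ b t := hmin t ht.1 ht.2
      calc ε' * a t ≤ b t * a t := mul_le_mul_of_nonneg_right hbt (ha_nonneg t)
        _ = f t := by rw [hf]; ring
    have h3 : ∑ t ∈ Finset.Ico u v, f t = P v - P u := by
      rw [hPdef]; exact Finset.sum_Ico_eq_sub f huv.le
    have h4 : P v - P u < ε' ^ 2 / K := by
      have hNu := hN u hu
      have := hPle v
      linarith
    have h5 : ∑ t ∈ Finset.Ico u v, a t < ε' / K := by
      rw [lt_div_iff₀ hK]
      have hKε : K * (ε' ^ 2 / K) = ε' * ε' := by field_simp [hK.ne']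
      nlinarith
    have h6 : K * ∑ t ∈ Finset.Ico u v, a t < ε' := by
      have := mul_lt_mul_of_pos_left h5 hK
      calc K * ∑ t ∈ Finset.Ico u v, a t < K * (ε' / K) := this
        _ = ε' := by field_simp
    have : b u - b v < ε' := lt_of_le_of_lt h1 h6
    linarith [hv.2, hbu]
  rw [Real.dist_eq, sub_zero, abs_of_nonneg (hb_nonneg u)]
  rw [hε'def] at key
  linarith
end

section
/- (Control of the full θ-partial gradient by the shifted block gradient.) In the stochastic block coordinate ascent setting, for every t ≥ 1, E[‖∇_θ f̂(θ_t, y_t)‖] ≤ L·β_t^max·√(M_ρ² + σ²) + E[‖g_t^θ‖], where ∇_θ f̂(θ_t, y_t) denotes the θ-partial gradient of f̂ evaluated at the current iterate x_t = (θ_t, y_t). -/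
open MeasureTheory Filter

noncomputable section

/-- The stochastic block coordinate ascent setting of the paper
"Mean-Variance Proximal Policy Gradient".

`H` is a real finite-dimensional inner product space; `f : H → ℝ → ℝ` is the
(curried) objective `f̂(θ, y)`, differentiable as a function on `H × ℝ`, bounded
above with supremum `fStar`, and with `L`-Lipschitz gradient (stated blockwise,
which for the Euclidean (ℓ²) structure on `H × ℝ` is exactly
`‖∇f̂(x) − ∇f̂(x')‖ ≤ L‖x − x'‖`).

On the probability space `(Ω, μ)` with filtration `F`, the iterates
`x_t = (θ t, y t)` are generated by the cyclic updates
`y_{t+1} = y_t + βy_t · g̃y_t`, `θ_{t+1} = θ_t + βθ_t • g̃θ_t`, with deterministic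
initial point `x1`; the exact block gradients are
`g^y_t = ∂_y f̂(θ_t, y_t)` and `g^θ_t = ∇_θ f̂(θ_t, y_{t+1})`, with estimation
errors `Δ^y_t = g̃^y_t − g^y_t`, `Δ^θ_t = g̃^θ_t − g^θ_t`.

Assumption (A1): `E[‖x_t‖²] ≤ ρ²`; assumption (A2): `E[(Δ^y_t)²] ≤ σ²`,
`E[‖Δ^θ_t‖²] ≤ σ²`, `E[Δ^y_t | F_{t-1}] = 0` a.s. and
`‖E[Δ^θ_t | F_{t-1}]‖ ≤ A·β_t^max` a.s.  The various integrability fields record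
that the expectations appearing in the theorems are well defined (finite). -/
structure BCA (H : Type) [NormedAddCommGroup H] [InnerProductSpace ℝ H]
    [FiniteDimensional ℝ H] (Ω : Type) [MeasurableSpace Ω] where
  /-- the underlying probability measure -/
  μ : Measure Ω
  prob : IsProbabilityMeasure μ
  /-- the filtration `(F_t)_{t ≥ 0}` -/
  F : ℕ → MeasurableSpace Ω
  F_le : ∀ t, F t ≤ ‹MeasurableSpace Ω›
  F_mono : Monotone F
  /-- the objective function `f̂`, written curried: `f θ y = f̂(θ, y)` -/
  f : H → ℝ → ℝ
  /-- the supremum `f̂*` of `f̂` -/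
  fStar : ℝ
  hfStar : IsLUB (Set.range fun p : H × ℝ => f p.1 p.2) fStar
  /-- the Lipschitz constant of the gradient -/
  L : ℝ
  L_pos : 0 < L
  hdiff : Differentiable ℝ fun p : H × ℝ => f p.1 p.2
  /-- `L`-Lipschitz continuity of the full gradient of `f̂` in the ℓ² product
  structure, written blockwise via the partial gradients. -/
  hlip : ∀ (θ₁ θ₂ : H) (y₁ y₂ : ℝ),
    ‖gradient (fun a => f a y₁) θ₁ - gradient (fun a => f a y₂) θ₂‖ ^ 2
        + (deriv (f θ₁) y₁ - deriv (f θ₂) y₂) ^ 2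
      ≤ L ^ 2 * (‖θ₁ - θ₂‖ ^ 2 + (y₁ - y₂) ^ 2)
  /-- the `θ`-iterates -/
  θ : ℕ → Ω → H
  /-- the `y`-iterates -/
  y : ℕ → Ω → ℝ
  /-- deterministic stepsizes for `θ` -/
  βθ : ℕ → ℝ
  /-- deterministic stepsizes for `y` -/
  βy : ℕ → ℝ
  βθ_pos : ∀ t, 0 < βθ t
  βy_pos : ∀ t, 0 < βy t
  /-- the stochastic estimate `g̃^y_t` -/
  gty : ℕ → Ω → ℝ
  /-- the stochastic estimate `g̃^θ_t` -/
  gtθ : ℕ → Ω → H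
  /-- the deterministic initial point `x₁ = (θ₁, y₁)` -/
  x1 : H × ℝ
  hx1 : ∀ ω, θ 1 ω = x1.1 ∧ y 1 ω = x1.2
  update_y : ∀ t, 1 ≤ t → ∀ ω, y (t + 1) ω = y t ω + βy t * gty t ω
  update_θ : ∀ t, 1 ≤ t → ∀ ω, θ (t + 1) ω = θ t ω + βθ t • gtθ t ω
  meas_x : ∀ t, 1 ≤ t → StronglyMeasurable[F (t - 1)] fun ω => (θ t ω, y t ω)
  meas_gty : ∀ t, 1 ≤ t → StronglyMeasurable[F t] (gty t)
  meas_gtθ : ∀ t, 1 ≤ t → StronglyMeasurable[F t] (gtθ t)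
  /-- the bound `ρ` of Assumption (A1) -/
  ρ : ℝ
  ρ_pos : 0 < ρ
  /-- Assumption (A1): `E[‖x_t‖²] ≤ ρ²`. -/
  hA1 : ∀ t, 1 ≤ t → ∫ ω, (‖θ t ω‖ ^ 2 + (y t ω) ^ 2) ∂μ ≤ ρ ^ 2
  /-- the variance bound `σ` of Assumption (A2) -/
  σ : ℝ
  /-- the bias constant `A` of Assumption (A2) -/
  A : ℝ
  σ_nonneg : 0 ≤ σ
  A_nonneg : 0 ≤ A
  /-- (A2): `E[(Δ^y_t)²] ≤ σ²`. -/
  hA2y_var : ∀ t, 1 ≤ t →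
    ∫ ω, (gty t ω - deriv (f (θ t ω)) (y t ω)) ^ 2 ∂μ ≤ σ ^ 2
  /-- (A2): `E[‖Δ^θ_t‖²] ≤ σ²`. -/
  hA2θ_var : ∀ t, 1 ≤ t →
    ∫ ω, ‖gtθ t ω - gradient (fun a => f a (y (t + 1) ω)) (θ t ω)‖ ^ 2 ∂μ ≤ σ ^ 2
  /-- (A2): `E[Δ^y_t | F_{t-1}] = 0` a.s. -/
  hA2y_unbiased : ∀ t, 1 ≤ t →
    μ[(fun ω => gty t ω - deriv (f (θ t ω)) (y t ω)) | F (t - 1)] =ᵐ[μ] 0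
  /-- (A2): `‖E[Δ^θ_t | F_{t-1}]‖ ≤ A · β_t^max` a.s. -/
  hA2θ_bias : ∀ t, 1 ≤ t → ∀ᵐ ω ∂μ,
    ‖(μ[(fun ω' => gtθ t ω' - gradient (fun a => f a (y (t + 1) ω')) (θ t ω')) |
        F (t - 1)]) ω‖ ≤ A * max (βy t) (βθ t)
  -- integrability of the various expectations appearing in the statements
  int_f : ∀ t, 1 ≤ t → Integrable (fun ω => f (θ t ω) (y t ω)) μ
  int_x_sq : ∀ t, 1 ≤ t → Integrable (fun ω => ‖θ t ω‖ ^ 2 + (y t ω) ^ 2) μ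
  int_gy_sq : ∀ t, 1 ≤ t →
    Integrable (fun ω => (deriv (f (θ t ω)) (y t ω)) ^ 2) μ
  int_gθ_sq : ∀ t, 1 ≤ t →
    Integrable (fun ω => ‖gradient (fun a => f a (y (t + 1) ω)) (θ t ω)‖ ^ 2) μ
  int_Δy : ∀ t, 1 ≤ t →
    Integrable (fun ω => gty t ω - deriv (f (θ t ω)) (y t ω)) μ
  int_Δθ : ∀ t, 1 ≤ t →
    Integrable (fun ω => gtθ t ω - gradient (fun a => f a (y (t + 1) ω)) (θ t ω)) μ
  int_Δy_sq : ∀ t, 1 ≤ t →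
    Integrable (fun ω => (gty t ω - deriv (f (θ t ω)) (y t ω)) ^ 2) μ
  int_Δθ_sq : ∀ t, 1 ≤ t →
    Integrable (fun ω =>
      ‖gtθ t ω - gradient (fun a => f a (y (t + 1) ω)) (θ t ω)‖ ^ 2) μ
  int_fullgrad : ∀ t, 1 ≤ t →
    Integrable (fun ω => Real.sqrt (‖gradient (fun a => f a (y t ω)) (θ t ω)‖ ^ 2
      + (deriv (f (θ t ω)) (y t ω)) ^ 2)) μ
  int_fullgrad_sq : ∀ t, 1 ≤ t →
    Integrable (fun ω => ‖gradient (fun a => f a (y t ω)) (θ t ω)‖ ^ 2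
      + (deriv (f (θ t ω)) (y t ω)) ^ 2) μ
  int_gθ_partial : ∀ t, 1 ≤ t →
    Integrable (fun ω => ‖gradient (fun a => f a (y t ω)) (θ t ω)‖) μ
  int_gθ_norm : ∀ t, 1 ≤ t →
    Integrable (fun ω => ‖gradient (fun a => f a (y (t + 1) ω)) (θ t ω)‖) μ

namespace BCA

variable {H : Type} [NormedAddCommGroup H] [InnerProductSpace ℝ H]
  [FiniteDimensional ℝ H] {Ω : Type} [MeasurableSpace Ω]

/-- the exact block gradient `g^y_t = ∂_y f̂(θ_t, y_t)` -/
def gy (S : BCA H Ω) (t : ℕ) (ω : Ω) : ℝ := deriv (S.f (S.θ t ω)) (S.y t ω)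

/-- the exact block gradient `g^θ_t = ∇_θ f̂(θ_t, y_{t+1})` -/
def gθ (S : BCA H Ω) (t : ℕ) (ω : Ω) : H :=
  gradient (fun a => S.f a (S.y (t + 1) ω)) (S.θ t ω)

/-- `β_t^max` -/
def βmax (S : BCA H Ω) (t : ℕ) : ℝ := max (S.βy t) (S.βθ t)

/-- `β_t^min` -/
def βmin (S : BCA H Ω) (t : ℕ) : ℝ := min (S.βy t) (S.βθ t)

/-- `M_ρ = √(2L²ρ² + 2·max{‖∇_θ f̂(0)‖², ‖∇_y f̂(0)‖²})` -/
def Mρ (S : BCA H Ω) : ℝ :=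
  Real.sqrt (2 * S.L ^ 2 * S.ρ ^ 2
    + 2 * max (‖gradient (fun a => S.f a 0) 0‖ ^ 2) ((deriv (S.f 0) 0) ^ 2))

/-- the squared norm of the full gradient `‖∇f̂(x_t)‖²`
(for the ℓ² structure on `H × ℝ`), expressed blockwise. -/
def fullGradSq (S : BCA H Ω) (t : ℕ) (ω : Ω) : ℝ :=
  ‖gradient (fun a => S.f a (S.y t ω)) (S.θ t ω)‖ ^ 2
    + (deriv (S.f (S.θ t ω)) (S.y t ω)) ^ 2

end BCA

end

open MeasureTheory

set_option maxHeartbeats 1000000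


lemma my_abs_integral_le_sqrt {Ω : Type} [MeasurableSpace Ω] {μ : Measure Ω}
    [IsProbabilityMeasure μ] {u : Ω → ℝ} (hu : Integrable u μ)
    (hu2 : Integrable (fun ω => u ω ^ 2) μ) :
    ∫ ω, |u ω| ∂μ ≤ Real.sqrt (∫ ω, u ω ^ 2 ∂μ) := by
  set V := ∫ ω, u ω ^ 2 ∂μ with hV
  have hV0 : 0 ≤ V := integral_nonneg fun ω => sq_nonneg _
  have key : ∀ c : ℝ, 0 < c → ∫ ω, |u ω| ∂μ ≤ V / (2 * c) + c / 2 := by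
    intro c hc
    have hpt : ∀ ω, |u ω| ≤ u ω ^ 2 / (2 * c) + c / 2 := by
      intro ω
      rw [div_add_div _ _ (by positivity : (2*c:ℝ) ≠ 0) (two_ne_zero),
        le_div_iff₀ (by positivity)]
      nlinarith [sq_nonneg (|u ω| - c), sq_abs (u ω)]
    have : ∫ ω, |u ω| ∂μ ≤ ∫ ω, (u ω ^ 2 / (2 * c) + c / 2) ∂μ :=
      integral_mono hu.abs ((hu2.div_const _).add (integrable_const _)) hpt
    calc ∫ ω, |u ω| ∂μ ≤ ∫ ω, (u ω ^ 2 / (2 * c) + c / 2) ∂μ := this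
      _ = V / (2 * c) + c / 2 := by
          rw [integral_add (hu2.div_const _) (integrable_const _), integral_div,
            integral_const]
          simp [hV]
  rcases eq_or_lt_of_le hV0 with h0 | hpos
  · rw [← h0, Real.sqrt_zero]
    refine le_of_forall_pos_le_add fun ε hε => ?_
    have := key ε hε
    rw [← h0] at this
    have h2 : (0:ℝ) / (2*ε) + ε/2 ≤ 0 + ε := by
      rw [zero_div]; linarith
    exact this.trans h2
  · have hs : 0 < Real.sqrt V := Real.sqrt_pos.mpr hpos
    have := key (Real.sqrt V) hs
    have hsq : Real.sqrt V ^ 2 = V := Real.sq_sqrt hV0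
    calc ∫ ω, |u ω| ∂μ ≤ V / (2 * Real.sqrt V) + Real.sqrt V / 2 := this
      _ = Real.sqrt V := by
          field_simp
          nlinarith [hsq]

lemma my_le_of_sq_le_sq {x r : ℝ} (hx : 0 ≤ x) (hr : 0 ≤ r) (h : x ^ 2 ≤ r ^ 2) :
    x ≤ r := by
  calc x = Real.sqrt (x ^ 2) := (Real.sqrt_sq hx).symm
    _ ≤ Real.sqrt (r ^ 2) := Real.sqrt_le_sqrt h
    _ = r := Real.sqrt_sq hr

/-- **Control of the full θ-partial gradient by the shifted block
gradient.** For every `t ≥ 1`,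
`E[‖∇_θ f̂(θ_t, y_t)‖] ≤ L·β_t^max·√(M_ρ² + σ²) + E[‖g_t^θ‖]`. -/
theorem BCA.theta_partial_grad_bound {H : Type} [NormedAddCommGroup H]
    [InnerProductSpace ℝ H] [FiniteDimensional ℝ H]
    {Ω : Type} [MeasurableSpace Ω] (S : BCA H Ω) (t : ℕ) (ht : 1 ≤ t) :
    ∫ ω, ‖gradient (fun a => S.f a (S.y t ω)) (S.θ t ω)‖ ∂S.μ
      ≤ S.L * S.βmax t * Real.sqrt (S.Mρ ^ 2 + S.σ ^ 2)
        + ∫ ω, ‖S.gθ t ω‖ ∂S.μ := by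
  classical
  haveI : IsProbabilityMeasure S.μ := S.prob
  set μ := S.μ with hμdef
  have hm : S.F (t - 1) ≤ ‹MeasurableSpace Ω› := S.F_le (t - 1)
  set g : Ω → ℝ := fun ω => deriv (S.f (S.θ t ω)) (S.y t ω) with hgdef
  set Δ : Ω → ℝ := fun ω => S.gty t ω - g ω with hΔdef
  have hLpos := S.L_pos
  -- continuity of the y-partial derivative as a function of (θ, y)
  have hDlip : LipschitzWith (Real.toNNReal (Real.sqrt 2 * S.L))
      (fun p : H × ℝ => deriv (S.f p.1) p.2) := by
    apply LipschitzWith.of_dist_le_mul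
    intro p q
    have h := S.hlip p.1 q.1 p.2 q.2
    have h1 : ‖p.1 - q.1‖ ≤ dist p q := by
      rw [Prod.dist_eq, ← dist_eq_norm]; exact le_max_left _ _
    have h2 : |p.2 - q.2| ≤ dist p q := by
      rw [Prod.dist_eq, ← Real.dist_eq]; exact le_max_right _ _
    have hd : dist (deriv (S.f p.1) p.2) (deriv (S.f q.1) q.2)
        = |deriv (S.f p.1) p.2 - deriv (S.f q.1) q.2| := Real.dist_eq _ _
    rw [hd, Real.coe_toNNReal _ (by positivity)]
    have hdq : 0 ≤ dist p q := dist_nonneg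
    have hsq : (Real.sqrt 2) ^ 2 = 2 := Real.sq_sqrt (by norm_num)
    refine my_le_of_sq_le_sq (abs_nonneg _) (by positivity) ?_
    have hq1 : ‖p.1 - q.1‖ ^ 2 ≤ dist p q ^ 2 :=
      pow_le_pow_left₀ (norm_nonneg _) h1 2
    have hq2 : (p.2 - q.2) ^ 2 ≤ dist p q ^ 2 := by
      rw [← sq_abs]; exact pow_le_pow_left₀ (abs_nonneg _) h2 2
    have hm1 : S.L ^ 2 * ‖p.1 - q.1‖ ^ 2 ≤ S.L ^ 2 * dist p q ^ 2 :=
      mul_le_mul_of_nonneg_left hq1 (sq_nonneg _)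
    have hm2 : S.L ^ 2 * (p.2 - q.2) ^ 2 ≤ S.L ^ 2 * dist p q ^ 2 :=
      mul_le_mul_of_nonneg_left hq2 (sq_nonneg _)
    have hnn := sq_nonneg ‖gradient (fun a => S.f a p.2) p.1
        - gradient (fun a => S.f a q.2) q.1‖
    have habs2 := sq_abs (deriv (S.f p.1) p.2 - deriv (S.f q.1) q.2)
    have hc : (Real.sqrt 2 * S.L * dist p q) ^ 2 = 2 * (S.L ^ 2 * dist p q ^ 2) := by
      rw [mul_pow, mul_pow, hsq]; ring
    rw [hc]
    nlinarith []
  have hg_meas : StronglyMeasurable[S.F (t - 1)] g :=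
    hDlip.continuous.comp_stronglyMeasurable (S.meas_x t ht)
  have hg_aesm : AEStronglyMeasurable g μ := (hg_meas.mono hm).aestronglyMeasurable
  -- integrability facts
  have hint_g2 : Integrable (fun ω => g ω ^ 2) μ := S.int_gy_sq t ht
  have hconde : μ[Δ|S.F (t - 1)] =ᵐ[μ] 0 := S.hA2y_unbiased t ht
  have hΔvar : ∫ ω, Δ ω ^ 2 ∂μ ≤ S.σ ^ 2 := S.hA2y_var t ht
  have hgeq : ∀ ω, g ω = deriv (S.f (S.θ t ω)) (S.y t ω) := fun ω => rfl
  have hΔeq : ∀ ω, Δ ω = S.gty t ω - g ω := fun ω => rfl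
  have hint_g : Integrable g μ := by
    refine Integrable.mono' (((integrable_const (1:ℝ)).add hint_g2).div_const 2) hg_aesm ?_
    filter_upwards with ω
    rw [Real.norm_eq_abs]
    simp only [Pi.add_apply]
    nlinarith [two_mul_le_add_sq 1 (abs (g ω)), sq_abs (g ω)]
  have hint_Δ : Integrable Δ μ := S.int_Δy t ht
  have hint_Δ2 : Integrable (fun ω => Δ ω ^ 2) μ := S.int_Δy_sq t ht
  clear_value Δ g
  clear hgdef hΔdef
  have hint_gty : Integrable (S.gty t) μ := by
    have : (S.gty t) = fun ω => g ω + Δ ω := by funext ω; rw [hΔeq]; ring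
    rw [this]; exact hint_g.add hint_Δ
  have hint_gΔ : Integrable (fun ω => g ω * Δ ω) μ := by
    refine Integrable.mono' ((hint_g2.add hint_Δ2).div_const 2)
      (hg_aesm.mul hint_Δ.aestronglyMeasurable) ?_
    filter_upwards with ω
    rw [Real.norm_eq_abs, abs_mul]
    simp only [Pi.add_apply]
    nlinarith [two_mul_le_add_sq (abs (g ω)) (abs (Δ ω)), sq_abs (g ω), sq_abs (Δ ω), abs_nonneg (g ω), abs_nonneg (Δ ω)]
  -- the cross term vanishes
  have hcross : ∫ ω, g ω * Δ ω ∂μ = 0 := by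
    have hpull : μ[(fun ω => g ω * Δ ω)|S.F (t - 1)] =ᵐ[μ] fun ω => g ω * (μ[Δ|S.F (t - 1)]) ω := by
      have := condExp_mul_of_stronglyMeasurable_left hg_meas
        (show Integrable (g * Δ) μ from hint_gΔ) hint_Δ
      filter_upwards [this] with ω hω using hω
    have hzero : μ[(fun ω => g ω * Δ ω)|S.F (t - 1)] =ᵐ[μ] 0 := by
      filter_upwards [hpull, hconde] with ω h1 h2
      simp [h1, h2]
    calc ∫ ω, g ω * Δ ω ∂μ = ∫ ω, (μ[(fun ω => g ω * Δ ω)|S.F (t - 1)]) ω ∂μ :=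
          (integral_condExp hm).symm
      _ = 0 := by rw [integral_congr_ae hzero]; simp
  -- bound on E[g²]
  set C : ℝ := 2 * S.L ^ 2 * S.ρ ^ 2
      + 2 * max (‖gradient (fun a => S.f a 0) 0‖ ^ 2) ((deriv (S.f 0) 0) ^ 2) with hCdef
  have hCnn : 0 ≤ C := by
    have h1 : (0:ℝ) ≤ max (‖gradient (fun a => S.f a 0) 0‖ ^ 2) ((deriv (S.f 0) 0) ^ 2) :=
      le_trans (sq_nonneg _) (le_max_right _ _)
    rw [hCdef]; positivity
  have hMρsq : S.Mρ ^ 2 = C := by rw [BCA.Mρ, Real.sq_sqrt hCnn]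
  have hg2_bound : ∫ ω, g ω ^ 2 ∂μ ≤ C := by
    have hpt : ∀ ω, g ω ^ 2 ≤ 2 * S.L ^ 2 * (‖S.θ t ω‖ ^ 2 + (S.y t ω) ^ 2)
        + 2 * max (‖gradient (fun a => S.f a 0) 0‖ ^ 2) ((deriv (S.f 0) 0) ^ 2) := by
      intro ω
      have h := S.hlip (S.θ t ω) 0 (S.y t ω) 0
      simp only [sub_zero] at h
      rw [← hgeq ω] at h
      have hmax : (deriv (S.f 0) 0) ^ 2
          ≤ max (‖gradient (fun a => S.f a 0) 0‖ ^ 2) ((deriv (S.f 0) 0) ^ 2) := le_max_right _ _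
      have h2 : (g ω - deriv (S.f 0) 0) ^ 2 ≤ S.L ^ 2 * (‖S.θ t ω‖ ^ 2 + (S.y t ω) ^ 2) := by
        nlinarith [sq_nonneg (‖gradient (fun a => S.f a (S.y t ω)) (S.θ t ω)
          - gradient (fun a => S.f a 0) 0‖)]
      nlinarith [sq_nonneg (g ω - 2 * deriv (S.f 0) 0)]
    have hint_rhs : Integrable (fun ω => 2 * S.L ^ 2 * (‖S.θ t ω‖ ^ 2 + (S.y t ω) ^ 2)
        + 2 * max (‖gradient (fun a => S.f a 0) 0‖ ^ 2) ((deriv (S.f 0) 0) ^ 2)) μ :=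
      (((S.int_x_sq t ht).const_mul _).add (integrable_const _))
    calc ∫ ω, g ω ^ 2 ∂μ
        ≤ ∫ ω, (2 * S.L ^ 2 * (‖S.θ t ω‖ ^ 2 + (S.y t ω) ^ 2)
            + 2 * max (‖gradient (fun a => S.f a 0) 0‖ ^ 2) ((deriv (S.f 0) 0) ^ 2)) ∂μ :=
          integral_mono hint_g2 hint_rhs hpt
      _ = 2 * S.L ^ 2 * ∫ ω, (‖S.θ t ω‖ ^ 2 + (S.y t ω) ^ 2) ∂μ
            + 2 * max (‖gradient (fun a => S.f a 0) 0‖ ^ 2) ((deriv (S.f 0) 0) ^ 2) := by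
          rw [integral_add ((S.int_x_sq t ht).const_mul _) (integrable_const _),
            integral_const, integral_const_mul]
          simp [hμdef]
      _ ≤ C := by
          have := S.hA1 t ht
          rw [hCdef]
          nlinarith [sq_nonneg S.L]
  -- bound on E[g̃²]
  have hint_gty2 : Integrable (fun ω => (S.gty t ω) ^ 2) μ := by
    have : (fun ω => (S.gty t ω) ^ 2)
        = fun ω => g ω ^ 2 + 2 * (g ω * Δ ω) + Δ ω ^ 2 := by
      funext ω; rw [hΔeq]; ring
    rw [this]
    exact (hint_g2.add (hint_gΔ.const_mul 2)).add hint_Δ2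
  have hgty2_bound : ∫ ω, (S.gty t ω) ^ 2 ∂μ ≤ S.Mρ ^ 2 + S.σ ^ 2 := by
    have hexp : ∫ ω, (S.gty t ω) ^ 2 ∂μ
        = ∫ ω, g ω ^ 2 ∂μ + 2 * ∫ ω, g ω * Δ ω ∂μ + ∫ ω, Δ ω ^ 2 ∂μ := by
      have hfun : (fun ω => (S.gty t ω) ^ 2)
          = fun ω => (g ω ^ 2 + 2 * (g ω * Δ ω)) + Δ ω ^ 2 := by
        funext ω; rw [hΔeq]; ring
      have e1 : Integrable (fun ω => g ω ^ 2 + 2 * (g ω * Δ ω)) μ :=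
        hint_g2.add (hint_gΔ.const_mul 2)
      have h1 : ∫ ω, (g ω ^ 2 + 2 * (g ω * Δ ω) + Δ ω ^ 2) ∂μ
          = ∫ ω, (g ω ^ 2 + 2 * (g ω * Δ ω)) ∂μ + ∫ ω, Δ ω ^ 2 ∂μ :=
        integral_add e1 hint_Δ2
      have h2 : ∫ ω, (g ω ^ 2 + 2 * (g ω * Δ ω)) ∂μ
          = ∫ ω, g ω ^ 2 ∂μ + ∫ ω, 2 * (g ω * Δ ω) ∂μ :=
        integral_add hint_g2 (hint_gΔ.const_mul 2)
      have h3 : ∫ ω, 2 * (g ω * Δ ω) ∂μ = 2 * ∫ ω, g ω * Δ ω ∂μ :=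
        integral_const_mul 2 _
      rw [hfun, h1, h2, h3]
    rw [hexp, hcross, hMρsq]
    simp only [mul_zero, add_zero]
    exact add_le_add hg2_bound hΔvar
  -- E|g̃| ≤ √(Mρ² + σ²)
  have habs : ∫ ω, |S.gty t ω| ∂μ ≤ Real.sqrt (S.Mρ ^ 2 + S.σ ^ 2) := by
    refine (my_abs_integral_le_sqrt hint_gty hint_gty2).trans ?_
    exact Real.sqrt_le_sqrt hgty2_bound
  -- pointwise bound
  have hpt : ∀ ω, ‖gradient (fun a => S.f a (S.y t ω)) (S.θ t ω)‖
      ≤ S.L * S.βy t * |S.gty t ω| + ‖S.gθ t ω‖ := by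
    intro ω
    have h := S.hlip (S.θ t ω) (S.θ t ω) (S.y t ω) (S.y (t + 1) ω)
    simp only [sub_self, norm_zero] at h
    have hupd : S.y (t + 1) ω = S.y t ω + S.βy t * S.gty t ω := S.update_y t ht ω
    have hrhs : (0:ℝ) ≤ S.L * S.βy t * |S.gty t ω| := by
      have h1 := (S.βy_pos t).le
      positivity
    have hsub : ‖gradient (fun a => S.f a (S.y t ω)) (S.θ t ω)
        - gradient (fun a => S.f a (S.y (t + 1) ω)) (S.θ t ω)‖
        ≤ S.L * S.βy t * |S.gty t ω| := by
      refine my_le_of_sq_le_sq (norm_nonneg _) hrhs ?_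
      have hy : (S.y t ω - S.y (t + 1) ω) ^ 2 = (S.βy t * S.gty t ω) ^ 2 := by
        rw [hupd]; ring
      calc ‖gradient (fun a => S.f a (S.y t ω)) (S.θ t ω)
            - gradient (fun a => S.f a (S.y (t + 1) ω)) (S.θ t ω)‖ ^ 2
          ≤ S.L ^ 2 * ((0:ℝ) ^ 2 + (S.y t ω - S.y (t + 1) ω) ^ 2) := by
            nlinarith [sq_nonneg (deriv (S.f (S.θ t ω)) (S.y t ω)
              - deriv (S.f (S.θ t ω)) (S.y (t + 1) ω))]
        _ = (S.L * S.βy t * |S.gty t ω|) ^ 2 := by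
            rw [hy, mul_pow (S.L * S.βy t), sq_abs]; ring
    have hgθ : S.gθ t ω = gradient (fun a => S.f a (S.y (t + 1) ω)) (S.θ t ω) := rfl
    calc ‖gradient (fun a => S.f a (S.y t ω)) (S.θ t ω)‖
        = ‖(gradient (fun a => S.f a (S.y t ω)) (S.θ t ω)
            - gradient (fun a => S.f a (S.y (t + 1) ω)) (S.θ t ω))
            + gradient (fun a => S.f a (S.y (t + 1) ω)) (S.θ t ω)‖ := by
          rw [sub_add_cancel]
      _ ≤ ‖gradient (fun a => S.f a (S.y t ω)) (S.θ t ω)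
            - gradient (fun a => S.f a (S.y (t + 1) ω)) (S.θ t ω)‖
            + ‖gradient (fun a => S.f a (S.y (t + 1) ω)) (S.θ t ω)‖ := norm_add_le _ _
      _ ≤ S.L * S.βy t * |S.gty t ω| + ‖S.gθ t ω‖ := by
          rw [hgθ]; exact add_le_add hsub le_rfl
  -- assemble
  have hβ : S.βy t ≤ S.βmax t := le_max_left _ _
  have hint_lhs : Integrable (fun ω => ‖gradient (fun a => S.f a (S.y t ω)) (S.θ t ω)‖) μ :=
    S.int_gθ_partial t ht
  have hint_gθn : Integrable (fun ω => ‖S.gθ t ω‖) μ := S.int_gθ_norm t ht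
  have hint_rhs : Integrable (fun ω => S.L * S.βy t * |S.gty t ω| + ‖S.gθ t ω‖) μ :=
    ((hint_gty.abs.const_mul _)).add hint_gθn
  have hsqrt_nn : 0 ≤ Real.sqrt (S.Mρ ^ 2 + S.σ ^ 2) := Real.sqrt_nonneg _
  calc ∫ ω, ‖gradient (fun a => S.f a (S.y t ω)) (S.θ t ω)‖ ∂μ
      ≤ ∫ ω, (S.L * S.βy t * |S.gty t ω| + ‖S.gθ t ω‖) ∂μ :=
        integral_mono hint_lhs hint_rhs hpt
    _ = S.L * S.βy t * ∫ ω, |S.gty t ω| ∂μ + ∫ ω, ‖S.gθ t ω‖ ∂μ := by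
        rw [integral_add (hint_gty.abs.const_mul _) hint_gθn, integral_const_mul]
    _ ≤ S.L * S.βmax t * Real.sqrt (S.Mρ ^ 2 + S.σ ^ 2) + ∫ ω, ‖S.gθ t ω‖ ∂μ := by
        have h1 : S.L * S.βy t * ∫ ω, |S.gty t ω| ∂μ
            ≤ S.L * S.βy t * Real.sqrt (S.Mρ ^ 2 + S.σ ^ 2) := by
          apply mul_le_mul_of_nonneg_left habs
          exact mul_nonneg hLpos.le (S.βy_pos t).le
        have h2 : S.L * S.βy t * Real.sqrt (S.Mρ ^ 2 + S.σ ^ 2)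
            ≤ S.L * S.βmax t * Real.sqrt (S.Mρ ^ 2 + S.σ ^ 2) := by
          apply mul_le_mul_of_nonneg_right _ hsqrt_nn
          exact mul_le_mul_of_nonneg_left hβ hLpos.le
        linarith
end

section
/- (Full-gradient norm controlled by block-gradient norms.) In the stochastic block coordinate ascent setting, for every t ≥ 1, E[‖∇f̂(x_t)‖²] ≤ L²·(β_t^max)²·(M_ρ² + σ²) + L·β_t^max·(2M_ρ² + σ²) + E[‖g_t^θ‖² + |g_t^y|²], where ∇f̂(x_t) denotes the full gradient of f̂ at x_t = (θ_t, y_t). -/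
open MeasureTheory Filter

open MeasureTheory

set_option maxHeartbeats 1600000 in
/-- **Full-gradient norm controlled by block-gradient norms.**
For every `t ≥ 1`,
`E[‖∇f̂(x_t)‖²] ≤ L²·(β_t^max)²·(M_ρ² + σ²) + L·β_t^max·(2M_ρ² + σ²)
  + E[‖g_t^θ‖² + |g_t^y|²]`. -/
theorem BCA.full_grad_sq_bound {H : Type} [NormedAddCommGroup H]
    [InnerProductSpace ℝ H] [FiniteDimensional ℝ H]
    {Ω : Type} [MeasurableSpace Ω] (S : BCA H Ω) (t : ℕ) (ht : 1 ≤ t) :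
    ∫ ω, S.fullGradSq t ω ∂S.μ
      ≤ S.L ^ 2 * (S.βmax t) ^ 2 * (S.Mρ ^ 2 + S.σ ^ 2)
        + S.L * S.βmax t * (2 * S.Mρ ^ 2 + S.σ ^ 2)
        + ∫ ω, (‖S.gθ t ω‖ ^ 2 + (S.gy t ω) ^ 2) ∂S.μ := by
  classical
  haveI := S.prob
  letI mH : MeasurableSpace H := borel H
  haveI : BorelSpace H := ⟨rfl⟩
  have hL0 : (0:ℝ) < S.L := S.L_pos
  have hβy0 : (0:ℝ) < S.βy t := S.βy_pos t
  have hβle : S.βy t ≤ S.βmax t := le_max_left _ _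
  have hβ0 : (0:ℝ) < S.βmax t := lt_of_lt_of_le hβy0 hβle
  -- abbreviations (as plain functions)
  set a : Ω → H := fun ω => gradient (fun p => S.f p (S.y t ω)) (S.θ t ω) with ha
  set g : Ω → ℝ := fun ω => deriv (S.f (S.θ t ω)) (S.y t ω) with hgdef
  set Δ : Ω → ℝ := fun ω => S.gty t ω - deriv (S.f (S.θ t ω)) (S.y t ω) with hΔdef
  set c : ℝ := 2 * max (‖gradient (fun p => S.f p 0) 0‖ ^ 2) ((deriv (S.f 0) 0) ^ 2)
    with hcdef
  have hc0 : 0 ≤ c := by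
    have := sq_nonneg ‖gradient (fun p => S.f p 0) 0‖
    have h2 := le_max_left (‖gradient (fun p => S.f p 0) 0‖ ^ 2) ((deriv (S.f 0) 0) ^ 2)
    nlinarith
  set M2 : ℝ := 2 * S.L ^ 2 * S.ρ ^ 2 + c with hM2def
  have hMρ : S.Mρ ^ 2 = M2 := by
    rw [BCA.Mρ, Real.sq_sqrt]
    positivity
  have hM2nonneg : 0 ≤ M2 := by rw [← hMρ]; exact sq_nonneg _
  -- pointwise second-moment bounds
  set B : Ω → ℝ := fun ω => 2 * S.L ^ 2 * (‖S.θ t ω‖ ^ 2 + (S.y t ω) ^ 2) + c with hBdef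
  have hmom : ∀ ω, ‖a ω‖ ^ 2 ≤ B ω ∧ (g ω) ^ 2 ≤ B ω := by
    intro ω
    simp only [ha, hgdef, hBdef, hcdef]
    have h := S.hlip (S.θ t ω) 0 (S.y t ω) 0
    simp only [sub_zero] at h
    set aω : H := gradient (fun p => S.f p (S.y t ω)) (S.θ t ω) with haω
    set a0 : H := gradient (fun p => S.f p 0) 0 with ha0
    set gω : ℝ := deriv (S.f (S.θ t ω)) (S.y t ω) with hgω
    set g0 : ℝ := deriv (S.f 0) 0 with hg0
    have htri : ‖aω‖ ≤ ‖aω - a0‖ + ‖a0‖ := by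
      have := norm_add_le (aω - a0) a0
      simpa using this
    have h1 := le_max_left (‖a0‖ ^ 2) (g0 ^ 2)
    have h2 := le_max_right (‖a0‖ ^ 2) (g0 ^ 2)
    constructor
    · nlinarith [norm_nonneg (aω - a0), norm_nonneg a0, norm_nonneg aω,
        sq_nonneg (‖aω - a0‖ - ‖a0‖), sq_nonneg (gω - g0)]
    · nlinarith [sq_nonneg (gω - 2 * g0), sq_nonneg (gω - g0),
        norm_nonneg (aω - a0), sq_nonneg ‖aω - a0‖]
  -- integrability facts
  have IB : Integrable B S.μ :=
    ((S.int_x_sq t ht).const_mul _).add (integrable_const _)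
  have hintB : ∫ ω, B ω ∂S.μ ≤ M2 := by
    rw [hBdef]
    rw [integral_add ((S.int_x_sq t ht).const_mul _) (integrable_const _),
      integral_const_mul, integral_const, probReal_univ]
    have hA1 := S.hA1 t ht
    have hL2 : (0:ℝ) ≤ 2 * S.L ^ 2 := by positivity
    simp only [ENNReal.toReal_one, smul_eq_mul, one_mul]
    nlinarith
  clear_value B M2 c Δ g a
  have Ifull : Integrable (fun ω => S.fullGradSq t ω) S.μ := S.int_fullgrad_sq t ht
  have Ig : Integrable (fun ω => (g ω) ^ 2) S.μ := by
    simp only [hgdef]; exact S.int_gy_sq t ht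
  have Igy : Integrable (fun ω => (S.gy t ω) ^ 2) S.μ := S.int_gy_sq t ht
  have Ia : Integrable (fun ω => ‖a ω‖ ^ 2) S.μ := by
    have h := (S.int_fullgrad_sq t ht).sub (S.int_gy_sq t ht)
    refine h.congr (Filter.Eventually.of_forall fun ω => ?_)
    simp [BCA.fullGradSq, ha]
  have Ib : Integrable (fun ω => ‖S.gθ t ω‖ ^ 2) S.μ := S.int_gθ_sq t ht
  have IΔ : Integrable Δ S.μ := by rw [hΔdef]; exact S.int_Δy t ht
  have IΔ2 : Integrable (fun ω => (Δ ω) ^ 2) S.μ := by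
    simp only [hΔdef]; exact S.int_Δy_sq t ht
  -- strong measurability of g w.r.t. F (t-1)
  have hgm : StronglyMeasurable[S.F (t - 1)] g := by
    have hx := S.meas_x t ht
    have hφ : Measurable fun p : H × ℝ =>
        fderiv ℝ (fun q : H × ℝ => S.f q.1 q.2) p ((0 : H), (1 : ℝ)) :=
      measurable_fderiv_apply_const ℝ _ _
    have key : ∀ u : H, ∀ v : ℝ, deriv (S.f u) v
        = fderiv ℝ (fun q : H × ℝ => S.f q.1 q.2) (u, v) ((0 : H), (1 : ℝ)) := by
      intro u v
      have hd : DifferentiableAt ℝ (fun q : H × ℝ => S.f q.1 q.2) (u, v) := S.hdiff _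
      have h1 : HasDerivAt (fun y : ℝ => ((u, y) : H × ℝ)) ((0 : H), (1 : ℝ)) v := by
        simpa using (hasDerivAt_const v u).prodMk (hasDerivAt_id v)
      have h2 := hd.hasFDerivAt.comp_hasDerivAt v h1
      exact h2.deriv
    have hge : g = (fun p : H × ℝ =>
        fderiv ℝ (fun q : H × ℝ => S.f q.1 q.2) p ((0 : H), (1 : ℝ)))
        ∘ (fun ω => (S.θ t ω, S.y t ω)) := by
      funext ω
      simp only [hgdef, Function.comp_apply]
      exact key (S.θ t ω) (S.y t ω)
    rw [hge]
    exact (hφ.comp hx.measurable).stronglyMeasurable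
  have hgaesm : AEStronglyMeasurable g S.μ :=
    (hgm.mono (S.F_le _)).aestronglyMeasurable
  have IgΔ : Integrable (fun ω => g ω * Δ ω) S.μ := by
    have Ibound : Integrable (fun ω => ((g ω) ^ 2 + (Δ ω) ^ 2) / 2) S.μ :=
      (Ig.add IΔ2).div_const 2
    refine Integrable.mono' Ibound (hgaesm.mul IΔ.aestronglyMeasurable) ?_
    filter_upwards with ω
    simp only [Real.norm_eq_abs, abs_mul]
    have h1 : (0:ℝ) ≤ (|g ω| - |Δ ω|) ^ 2 := sq_nonneg _
    have h2 : |g ω| ^ 2 = g ω ^ 2 := sq_abs _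
    have h3 : |Δ ω| ^ 2 = Δ ω ^ 2 := sq_abs _
    nlinarith [h1, h2, h3]
  have hgteq : ∀ ω, S.gty t ω = g ω + Δ ω := fun ω => by
    simp only [hgdef, hΔdef]; ring
  have Igt2 : Integrable (fun ω => (S.gty t ω) ^ 2) S.μ := by
    have h : (fun ω => (S.gty t ω) ^ 2)
        = fun ω => (g ω) ^ 2 + 2 * (g ω * Δ ω) + (Δ ω) ^ 2 := by
      funext ω; rw [hgteq ω]; ring
    rw [h]
    exact (Ig.add (IgΔ.const_mul 2)).add IΔ2
  -- orthogonality: ∫ g·Δ = 0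
  have horth : ∫ ω, g ω * Δ ω ∂S.μ = 0 := by
    have hm : S.F (t - 1) ≤ ‹MeasurableSpace Ω› := S.F_le (t - 1)
    have hpull : S.μ[g * Δ | S.F (t - 1)] =ᵐ[S.μ] g * S.μ[Δ | S.F (t - 1)] :=
      condExp_mul_of_stronglyMeasurable_left hgm (by exact IgΔ) IΔ
    have h0 : S.μ[Δ | S.F (t - 1)] =ᵐ[S.μ] 0 := by
      rw [hΔdef]; exact S.hA2y_unbiased t ht
    have hzero : S.μ[g * Δ | S.F (t - 1)] =ᵐ[S.μ] 0 := by
      filter_upwards [hpull, h0] with ω h1 h2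
      simp only [Pi.mul_apply, Pi.zero_apply] at h1 h2 ⊢
      rw [h1, h2, mul_zero]
    calc ∫ ω, g ω * Δ ω ∂S.μ = ∫ ω, (S.μ[g * Δ | S.F (t - 1)]) ω ∂S.μ :=
          (integral_condExp hm).symm
      _ = ∫ ω, (0 : Ω → ℝ) ω ∂S.μ := integral_congr_ae hzero
      _ = 0 := by simp
  -- second-moment integral bounds
  have hMa : ∫ ω, ‖a ω‖ ^ 2 ∂S.μ ≤ M2 :=
    le_trans (integral_mono Ia IB fun ω => (hmom ω).1) hintB
  have hMg : ∫ ω, (g ω) ^ 2 ∂S.μ ≤ M2 :=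
    le_trans (integral_mono Ig IB fun ω => (hmom ω).2) hintB
  have hgt2 : ∫ ω, (S.gty t ω) ^ 2 ∂S.μ ≤ M2 + S.σ ^ 2 := by
    have h : (fun ω => (S.gty t ω) ^ 2)
        = fun ω => (g ω) ^ 2 + 2 * (g ω * Δ ω) + (Δ ω) ^ 2 := by
      funext ω; rw [hgteq ω]; ring
    have I2 : Integrable (fun ω => 2 * (g ω * Δ ω)) S.μ := IgΔ.const_mul 2
    have I1 : Integrable (fun ω => g ω ^ 2 + 2 * (g ω * Δ ω)) S.μ := Ig.add I2
    rw [h, integral_add I1 IΔ2, integral_add Ig I2, integral_const_mul, horth]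
    have hvar := S.hA2y_var t ht
    simp only [hΔdef]
    linarith [hvar]
  -- key pointwise inequality
  have hpt : ∀ ω, S.fullGradSq t ω
      ≤ (‖S.gθ t ω‖ ^ 2 + (S.gy t ω) ^ 2)
        + (S.L * S.βmax t) * (‖a ω‖ ^ 2 + (S.gty t ω) ^ 2) := by
    intro ω
    simp only [BCA.fullGradSq, BCA.gy, ha]
    have hup := S.update_y t ht ω
    have hlip := S.hlip (S.θ t ω) (S.θ t ω) (S.y t ω) (S.y (t + 1) ω)
    rw [hup] at hlip
    simp only [sub_self, norm_zero] at hlip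
    set aω : H := gradient (fun p => S.f p (S.y t ω)) (S.θ t ω) with haω
    set bω : H := S.gθ t ω with hbω
    have hbω' : gradient (fun p => S.f p (S.y t ω + S.βy t * S.gty t ω)) (S.θ t ω) = bω := by
      rw [hbω, BCA.gθ, hup]
    rw [hbω'] at hlip
    have hab2 : ‖aω - bω‖ ^ 2 ≤ (S.L * S.βy t * |S.gty t ω|) ^ 2 := by
      have habs : (S.L * S.βy t * |S.gty t ω|) ^ 2
          = S.L ^ 2 * (0 ^ 2 + (S.y t ω - (S.y t ω + S.βy t * S.gty t ω)) ^ 2) := by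
        rw [mul_pow, mul_pow, sq_abs]; ring
      rw [habs]
      nlinarith [hlip, sq_nonneg (deriv (S.f (S.θ t ω)) (S.y t ω)
        - deriv (S.f (S.θ t ω)) (S.y t ω + S.βy t * S.gty t ω))]
    have hab : ‖aω - bω‖ ≤ S.L * S.βy t * |S.gty t ω| := by
      refine le_of_pow_le_pow_left₀ two_ne_zero ?_ hab2
      exact mul_nonneg (mul_nonneg hL0.le hβy0.le) (abs_nonneg _)
    have hinner : ‖bω‖ ^ 2 = ‖aω‖ ^ 2 - 2 * (inner ℝ aω (aω - bω) : ℝ)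
        + ‖aω - bω‖ ^ 2 := by
      have h := norm_sub_sq_real aω (aω - bω)
      simpa using h
    have hcs : (inner ℝ aω (aω - bω) : ℝ) ≤ ‖aω‖ * ‖aω - bω‖ :=
      real_inner_le_norm _ _
    have h1 : (2 * ‖aω‖) * ‖aω - bω‖ ≤ (2 * ‖aω‖) * (S.L * S.βy t * |S.gty t ω|) :=
      mul_le_mul_of_nonneg_left hab (by positivity)
    have h2 : 2 * ‖aω‖ * |S.gty t ω| ≤ ‖aω‖ ^ 2 + (S.gty t ω) ^ 2 := by
      nlinarith [sq_nonneg (‖aω‖ - |S.gty t ω|), sq_abs (S.gty t ω)]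
    have h3 : S.L * S.βy t * (2 * ‖aω‖ * |S.gty t ω|)
        ≤ S.L * S.βy t * (‖aω‖ ^ 2 + (S.gty t ω) ^ 2) :=
      mul_le_mul_of_nonneg_left h2 (mul_nonneg hL0.le hβy0.le)
    have h4 : S.L * S.βy t * (‖aω‖ ^ 2 + (S.gty t ω) ^ 2)
        ≤ S.L * S.βmax t * (‖aω‖ ^ 2 + (S.gty t ω) ^ 2) := by
      have hnn : 0 ≤ ‖aω‖ ^ 2 + (S.gty t ω) ^ 2 := by positivity
      have : S.L * S.βy t ≤ S.L * S.βmax t :=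
        mul_le_mul_of_nonneg_left hβle hL0.le
      exact mul_le_mul_of_nonneg_right this hnn
    nlinarith [hinner, hcs, h1, h3, h4, sq_nonneg (‖aω - bω‖)]
  -- put everything together
  have Isum1 : Integrable (fun ω => ‖S.gθ t ω‖ ^ 2 + (S.gy t ω) ^ 2) S.μ := Ib.add Igy
  have Isum2 : Integrable (fun ω => ‖a ω‖ ^ 2 + (S.gty t ω) ^ 2) S.μ := Ia.add Igt2
  have Iconst : Integrable
      (fun ω => (S.L * S.βmax t) * (‖a ω‖ ^ 2 + (S.gty t ω) ^ 2)) S.μ :=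
    Isum2.const_mul _
  have Irhs : Integrable (fun ω => (‖S.gθ t ω‖ ^ 2 + (S.gy t ω) ^ 2)
      + (S.L * S.βmax t) * (‖a ω‖ ^ 2 + (S.gty t ω) ^ 2)) S.μ :=
    Isum1.add Iconst
  have hmain : ∫ ω, S.fullGradSq t ω ∂S.μ
      ≤ ∫ ω, ((‖S.gθ t ω‖ ^ 2 + (S.gy t ω) ^ 2)
        + (S.L * S.βmax t) * (‖a ω‖ ^ 2 + (S.gty t ω) ^ 2)) ∂S.μ :=
    integral_mono Ifull Irhs hpt
  rw [integral_add Isum1 Iconst, integral_const_mul,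
    integral_add Ia Igt2] at hmain
  have hsum : ∫ ω, ‖a ω‖ ^ 2 ∂S.μ + ∫ ω, (S.gty t ω) ^ 2 ∂S.μ ≤ 2 * M2 + S.σ ^ 2 := by
    linarith
  have hLβ : 0 ≤ S.L * S.βmax t := mul_nonneg hL0.le hβ0.le
  have hsq : 0 ≤ S.L ^ 2 * (S.βmax t) ^ 2 * (M2 + S.σ ^ 2) := by
    rw [← hMρ]; positivity
  have hmul : S.L * S.βmax t * (∫ ω, ‖a ω‖ ^ 2 ∂S.μ + ∫ ω, (S.gty t ω) ^ 2 ∂S.μ)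
      ≤ S.L * S.βmax t * (2 * M2 + S.σ ^ 2) :=
    mul_le_mul_of_nonneg_left hsum hLβ
  rw [hMρ]
  linarith
end
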